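/- arXiv:1504.03453 — 3 statements merged into one kernel-verified Lean document; each statement's English description precedes it below -/
import Mathlib

section
/- The power series Σ_{j≥0} a_j * (-1)^j / 2^(2j+1) * x^(2j+1), with a_j = (2j)!/(j!(j+1)!), converges for real x with |x| < 1 to x/(1 + sqrt(1 + x^2)), which equals (sqrt(1 + x^2) - 1)/x for x ≠ 0. -/
noncomputable def a (j : ℕ) : ℝ :=
  (Nat.factorial (2 * j) : ℝ) / ((Nat.factorial j : ℝ) * (Nat.factorial (j + 1) : ℝ))

open Finset

lemma centralBinom_le_four_pow (n : ℕ) : Nat.centralBinom n ≤ 4 ^ n := by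
  have h : Nat.centralBinom n ≤ ∑ m ∈ range (2 * n + 1), (2 * n).choose m := by
    apply Finset.single_le_sum (f := fun m => (2 * n).choose m) (fun i _ => Nat.zero_le _)
    simp [Nat.lt_succ_iff]; omega
  calc Nat.centralBinom n ≤ 2 ^ (2 * n) := by
        rw [← Nat.sum_range_choose (2 * n)]; exact h
    _ = 4 ^ n := by rw [pow_mul]; norm_num

lemma catalan_le_four_pow (n : ℕ) : catalan n ≤ 4 ^ n :=
  le_trans (by rw [catalan_eq_centralBinom_div]; exact Nat.div_le_self _ _)
    (centralBinom_le_four_pow n)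

lemma catalan_succ_ratio (n : ℕ) :
    (n + 2) * catalan (n + 1) = 2 * (2 * n + 1) * catalan n := by
  have h1 := succ_mul_catalan_eq_centralBinom (n + 1)
  have h2 := Nat.succ_mul_centralBinom_succ n
  have h3 := succ_mul_catalan_eq_centralBinom n
  have key : (n + 1) * ((n + 2) * catalan (n + 1)) =
      (n + 1) * (2 * (2 * n + 1) * catalan n) := by
    calc (n + 1) * ((n + 2) * catalan (n + 1)) = (n + 1) * Nat.centralBinom (n + 1) := by
          rw [← h1]; try ring
      _ = 2 * (2 * n + 1) * Nat.centralBinom n := h2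
      _ = 2 * (2 * n + 1) * ((n + 1) * catalan n) := by rw [h3]
      _ = (n + 1) * (2 * (2 * n + 1) * catalan n) := by ring
  exact Nat.eq_of_mul_eq_mul_left (Nat.succ_pos n) key

lemma catalan_succ_le (n : ℕ) : catalan (n + 1) ≤ 4 * catalan n := by
  have h := catalan_succ_ratio n
  have : (n + 2) * catalan (n + 1) ≤ (n + 2) * (4 * catalan n) := by
    rw [h]; nlinarith [Nat.zero_le (catalan n)]
  exact Nat.le_of_mul_le_mul_left this (by omega)

lemma a_eq_catalan (j : ℕ) : a j = (catalan j : ℝ) := by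
  have h1 : (2 * j).choose j * Nat.factorial j * Nat.factorial j = Nat.factorial (2 * j) := by
    have := Nat.choose_mul_factorial_mul_factorial (show j ≤ 2 * j by omega)
    simpa [two_mul, Nat.add_sub_cancel] using this
  have h2 : (j + 1) * catalan j = (2 * j).choose j := by
    rw [succ_mul_catalan_eq_centralBinom, Nat.centralBinom_eq_two_mul_choose]
  have hfj : (Nat.factorial j : ℝ) ≠ 0 := Nat.cast_ne_zero.2 (Nat.factorial_ne_zero j)
  have hj1 : ((j : ℝ) + 1) ≠ 0 := by positivity
  rw [a, ← h1, ← h2]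
  rw [Nat.factorial_succ]
  push_cast
  field_simp

theorem series_a (x : ℝ) (hx : |x| < 1) :
    HasSum (fun j : ℕ => a j * (-1) ^ j / 2 ^ (2 * j + 1) * x ^ (2 * j + 1))
      (x / (1 + Real.sqrt (1 + x ^ 2))) ∧
    (x ≠ 0 → x / (1 + Real.sqrt (1 + x ^ 2)) = (Real.sqrt (1 + x ^ 2) - 1) / x) := by
  set r := Real.sqrt (1 + x ^ 2) with hrdef
  have hx2 : x ^ 2 < 1 := by
    have := abs_nonneg x
    nlinarith [sq_abs x, hx]
  have hx2n : (0:ℝ) ≤ x ^ 2 := sq_nonneg x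
  have hr2 : r ^ 2 = 1 + x ^ 2 := Real.sq_sqrt (by positivity)
  have hr1 : 1 ≤ r := by
    rw [hrdef]
    have h := Real.sqrt_le_sqrt (show (1:ℝ) ≤ 1 + x ^ 2 by nlinarith)
    rwa [Real.sqrt_one] at h
  -- the basic series
  set w : ℝ := -(x ^ 2 / 4) with hwdef
  set f : ℕ → ℝ := fun j => (catalan j : ℝ) * w ^ j with hfdef
  have hwabs : |w| ≤ x ^ 2 / 4 := by rw [hwdef, abs_neg, abs_of_nonneg (by positivity)]
  have hbound : ∀ j, ‖f j‖ ≤ (x ^ 2) ^ j := by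
    intro j
    have h1 : ‖f j‖ = (catalan j : ℝ) * |w| ^ j := by
      rw [hfdef]; simp [abs_mul, abs_pow]
    rw [h1]
    have h2 : (catalan j : ℝ) ≤ 4 ^ j := by
      have h : ((catalan j : ℕ) : ℝ) ≤ ((4 ^ j : ℕ) : ℝ) :=
        Nat.cast_le.2 (catalan_le_four_pow j)
      push_cast at h
      exact h
    calc (catalan j : ℝ) * |w| ^ j ≤ 4 ^ j * (x ^ 2 / 4) ^ j := by
          apply mul_le_mul h2 (pow_le_pow_left₀ (abs_nonneg w) hwabs j)
            (by positivity) (by positivity)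
      _ = (x ^ 2) ^ j := by rw [← mul_pow]; ring_nf
  have hnorm : Summable fun j => ‖f j‖ :=
    Summable.of_nonneg_of_le (fun j => norm_nonneg _) hbound
      (summable_geometric_of_lt_one hx2n hx2)
  have hsumf : Summable f := hnorm.of_norm
  set S : ℝ := ∑' j, f j with hSdef
  -- Cauchy product
  have hcauchy : S * S = ∑' n, (catalan (n + 1) : ℝ) * w ^ n := by
    rw [hSdef, tsum_mul_tsum_eq_tsum_sum_antidiagonal_of_summable_norm hnorm hnorm]
    congr 1
    funext n
    calc ∑ kl ∈ Finset.HasAntidiagonal.antidiagonal n, f kl.1 * f kl.2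
        = ∑ kl ∈ Finset.HasAntidiagonal.antidiagonal n, ((catalan kl.1 : ℝ) * (catalan kl.2 : ℝ)) * w ^ n := by
          apply Finset.sum_congr rfl
          intro kl hkl
          have := Finset.HasAntidiagonal.mem_antidiagonal.1 hkl
          rw [hfdef]
          simp only
          rw [← this, pow_add]; ring
      _ = (catalan (n + 1) : ℝ) * w ^ n := by
          rw [← Finset.sum_mul, catalan_succ' n]
          push_cast
          ring
  -- the quadratic equation
  have hf0 : f 0 = 1 := by simp [hfdef]
  have hshift : HasSum (fun n => f (n + 1)) (S - 1) := by
    apply (hasSum_nat_add_iff (f := f) 1).2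
    simpa [hf0] using hsumf.hasSum
  have hquad : w * (S * S) = S - 1 := by
    rw [hcauchy, ← tsum_mul_left]
    have : (fun n => w * ((catalan (n + 1) : ℝ) * w ^ n)) = fun n => f (n + 1) := by
      funext n; rw [hfdef]; simp only; rw [pow_succ]; ring
    rw [this, hshift.tsum_eq]
  -- nonnegativity of S
  have hSnn : 0 ≤ S := by
    have hinj2 : Function.Injective (fun k : ℕ => 2 * k) := fun a b h => by
      have h' : 2 * a = 2 * b := h
      omega
    have hinj2' : Function.Injective (fun k : ℕ => 2 * k + 1) := fun a b h => by
      have h' : 2 * a + 1 = 2 * b + 1 := h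
      omega
    have he : Summable fun k => f (2 * k) := hsumf.comp_injective hinj2
    have ho : Summable fun k => f (2 * k + 1) := hsumf.comp_injective hinj2'
    have hS : S = (∑' k, f (2 * k)) + ∑' k, f (2 * k + 1) := by
      exact hsumf.hasSum.unique (HasSum.even_add_odd he.hasSum ho.hasSum)
    rw [hS, ← he.tsum_add ho]
    apply tsum_nonneg
    intro k
    have hw2k : w ^ (2 * k) = (x ^ 2 / 4) ^ (2 * k) := by
      rw [hwdef]
      rw [show -(x ^ 2 / 4) = (-1) * (x ^ 2 / 4) by ring, mul_pow]
      simp [pow_mul]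
    have hw2k1 : w ^ (2 * k + 1) = -((x ^ 2 / 4) ^ (2 * k + 1)) := by
      rw [pow_succ, hw2k, pow_succ, hwdef]; ring
    rw [hfdef]
    simp only
    rw [hw2k, hw2k1]
    have hkey : (catalan (2 * k + 1) : ℝ) * (x ^ 2 / 4) ^ (2 * k + 1) ≤
        (catalan (2 * k) : ℝ) * (x ^ 2 / 4) ^ (2 * k) := by
      rw [pow_succ]
      have hc : (catalan (2 * k + 1) : ℝ) ≤ 4 * catalan (2 * k) := by
        exact_mod_cast Nat.cast_le.2 (catalan_succ_le (2 * k))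
      have ht4 : x ^ 2 / 4 ≤ 1 / 4 := by linarith
      have htnn : (0:ℝ) ≤ x ^ 2 / 4 := by positivity
      have hpnn : (0:ℝ) ≤ (x ^ 2 / 4) ^ (2 * k) := by positivity
      calc (catalan (2 * k + 1) : ℝ) * ((x ^ 2 / 4) ^ (2 * k) * (x ^ 2 / 4))
          ≤ (4 * catalan (2 * k)) * ((x ^ 2 / 4) ^ (2 * k) * (1 / 4)) := by
            apply mul_le_mul hc (by apply mul_le_mul_of_nonneg_left ht4 hpnn)
              (by positivity) (by positivity)
        _ = (catalan (2 * k) : ℝ) * (x ^ 2 / 4) ^ (2 * k) := by ring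
    linarith
  -- solve for S
  have hsol : x ^ 2 * S = 2 * r - 2 := by
    have hquad' : -(x ^ 2 / 4) * (S * S) = S - 1 := by
      rw [← hwdef]; exact hquad
    have hexp : (x ^ 2 * S + 2) ^ 2 = (2 * r) ^ 2 := by
      linear_combination (-4 * x ^ 2) * hquad' + (-4) * hr2
    have hfac : (x ^ 2 * S + 2 - 2 * r) * (x ^ 2 * S + 2 + 2 * r) = 0 := by
      linear_combination hexp
    have hpos : x ^ 2 * S + 2 + 2 * r > 0 := by nlinarith [mul_nonneg hx2n hSnn]
    have := mul_eq_zero.1 hfac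
    rcases this with h | h
    · linarith
    · linarith
  have hval : x / 2 * S = x / (1 + r) := by
    have h1r : (1:ℝ) + r ≠ 0 := by linarith
    rcases eq_or_ne x 0 with hx0 | hx0
    · have : S - 1 = w * (S * S) := hquad.symm
      have hw0 : w = 0 := by rw [hwdef, hx0]; ring
      have hS1 : S = 1 := by rw [hw0] at this; linarith
      rw [hx0]; simp
    · have hx2ne : x ^ 2 ≠ 0 := pow_ne_zero 2 hx0
      field_simp
      have hgoal : x * (x * S * (1 + r)) = x * (x * 2) := by
        linear_combination (1 + r) * hsol + 2 * hr2
      exact mul_left_cancel₀ hx0 (mul_left_cancel₀ hx0 (by linear_combination hgoal))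
  constructor
  · have heq : (fun j : ℕ => a j * (-1) ^ j / 2 ^ (2 * j + 1) * x ^ (2 * j + 1)) =
        fun j => x / 2 * f j := by
      funext j
      rw [a_eq_catalan, hfdef]
      simp only
      rw [hwdef]
      rw [show (-(x ^ 2 / 4)) ^ j = (-1) ^ j * (x ^ 2) ^ j / 4 ^ j by
        rw [show -(x^2/4) = (-1) * x^2 / 4 by ring, div_pow, mul_pow]; try ring]
      rw [pow_succ (x) (2*j), pow_mul, pow_succ (2:ℝ) (2*j), pow_mul]
      norm_num
      try ring
    rw [heq, hval.symm]
    exact hsumf.hasSum.mul_left (x / 2)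
  · intro hx0
    have h1r : (1:ℝ) + r ≠ 0 := by linarith
    field_simp
    linear_combination -hr2
end

section
/- The power series Σ_{j≥1} b_j * (-1)^j / 2^(2j) * x^(2j-2), with b_j = (2j-1)!/(j!(j-1)!), converges for real x with 0 < |x| < 1 to (1/2) * (1/(1 + sqrt(1 + x^2)) - 1/sqrt(1 + x^2)). -/
noncomputable def b (j : ℕ) : ℝ :=
  if j = 0 then 0
  else (Nat.factorial (2 * j - 1) : ℝ) / ((Nat.factorial j : ℝ) * (Nat.factorial (j - 1) : ℝ))

/-- Normalized central binomial coefficient `C(2n,n)/4^n`. -/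
noncomputable def W (n : ℕ) : ℝ := (Nat.centralBinom n : ℝ) / 4 ^ n

lemma W_zero : W 0 = 1 := by simp [W]

lemma W_pos (n : ℕ) : 0 < W n := by
  have h : (0:ℝ) < (Nat.centralBinom n : ℝ) := by exact_mod_cast Nat.centralBinom_pos n
  exact div_pos h (by positivity)

lemma W_succ (n : ℕ) : W (n + 1) = W n * (2 * n + 1) / (2 * n + 2) := by
  have h := Nat.succ_mul_centralBinom_succ n
  have h' : ((n:ℝ) + 1) * (Nat.centralBinom (n+1) : ℝ)
      = 2 * (2 * n + 1) * (Nat.centralBinom n : ℝ) := by exact_mod_cast h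
  have hn : ((n:ℝ) + 1) ≠ 0 := by positivity
  have h4 : (4:ℝ) ^ (n+1) ≠ 0 := by positivity
  unfold W
  rw [pow_succ]
  field_simp
  linear_combination 2 * h'

lemma W_succ_le (n : ℕ) : W (n + 1) ≤ W n := by
  rw [W_succ]
  have h1 : (0:ℝ) < 2 * n + 2 := by positivity
  rw [div_le_iff₀ h1]
  nlinarith [W_pos n]

lemma W_le_one (n : ℕ) : W n ≤ 1 := by
  induction n with
  | zero => simp [W_zero]
  | succ k ih => exact (W_succ_le k).trans ih

/-- The WZ certificate for the convolution identity. -/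
noncomputable def G (n k : ℕ) : ℝ := -((k : ℝ) / (n + 1)) * W k * W (n + 1 - k)

lemma tele (n k : ℕ) (hk : k ≤ n) :
    W k * W (n + 1 - k) - W k * W (n - k) = G n (k + 1) - G n k := by
  obtain ⟨m, rfl⟩ := Nat.exists_eq_add_of_le hk
  have h1 : k + m + 1 - k = m + 1 := by omega
  have h2 : k + m - k = m := by omega
  have h3 : k + m + 1 - (k + 1) = m := by omega
  unfold G
  rw [h1, h2, h3, W_succ m, W_succ k]
  have hm : (0:ℝ) < 2 * m + 2 := by positivity
  have hk2 : (0:ℝ) < 2 * k + 2 := by positivity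
  have hn : (0:ℝ) < (k : ℝ) + m + 1 := by positivity
  push_cast
  field_simp
  ring

/-- Convolution partial sums. -/
noncomputable def B (n : ℕ) : ℝ := ∑ k ∈ Finset.range (n + 1), W k * W (n - k)

lemma B_succ (n : ℕ) : B (n + 1) = B n := by
  have tel : ∑ k ∈ Finset.range (n + 1), (G n (k + 1) - G n k) = G n (n + 1) - G n 0 :=
    Finset.sum_range_sub (G n) (n + 1)
  have hsplit : ∑ k ∈ Finset.range (n + 1), W k * W (n + 1 - k)
      = ∑ k ∈ Finset.range (n + 1), (W k * W (n - k) + (G n (k + 1) - G n k)) := by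
    refine Finset.sum_congr rfl fun k hk => ?_
    have hk' : k ≤ n := Nat.lt_succ_iff.mp (Finset.mem_range.mp hk)
    have := tele n k hk'
    linarith
  have hG0 : G n 0 = 0 := by simp [G]
  have hGn : G n (n + 1) = -W (n + 1) := by
    have : n + 1 - (n + 1) = 0 := by omega
    have hn : ((n:ℝ) + 1) ≠ 0 := by positivity
    simp only [G, this, W_zero]
    push_cast
    field_simp
  unfold B
  rw [Finset.sum_range_succ]
  have hlast : n + 1 - (n + 1) = 0 := by omega
  rw [hlast, W_zero, hsplit, Finset.sum_add_distrib, tel, hG0, hGn]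
  ring

lemma B_eq_one (n : ℕ) : B n = 1 := by
  induction n with
  | zero => simp [B, W_zero]
  | succ k ih => rw [B_succ, ih]

lemma conv_eq (n : ℕ) : ∑ k ∈ Finset.range (n + 1), W k * W (n - k) = 1 := B_eq_one n

lemma key (x : ℝ) (hx0 : x ≠ 0) (hx : |x| < 1) :
    HasSum (fun n => W n * (-(x ^ 2)) ^ n) (1 / Real.sqrt (1 + x ^ 2)) := by
  set f : ℕ → ℝ := fun n => W n * (-(x ^ 2)) ^ n with hf_def
  have hx2 : x ^ 2 < 1 := by rwa [sq_lt_one_iff_abs_lt_one]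
  have hx2pos : 0 < x ^ 2 := by positivity
  have hnorm : ∀ n, ‖f n‖ ≤ (x ^ 2) ^ n := by
    intro n
    have : ‖f n‖ = W n * (x ^ 2) ^ n := by
      rw [hf_def]
      rw [Real.norm_eq_abs, abs_mul, abs_pow, abs_neg, abs_of_nonneg hx2pos.le,
        abs_of_pos (W_pos n)]
    rw [this]
    nlinarith [W_le_one n, pow_pos hx2pos n, pow_nonneg hx2pos.le n, W_pos n,
      mul_le_of_le_one_left (pow_nonneg hx2pos.le n) (W_le_one n)]
  have hsumnorm : Summable fun n => ‖f n‖ :=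
    Summable.of_nonneg_of_le (fun n => norm_nonneg _) hnorm
      (summable_geometric_of_lt_one hx2pos.le hx2)
  have hsum : Summable f := hsumnorm.of_norm
  set S := ∑' n, f n with hS_def
  have hS : HasSum f S := hsum.hasSum
  -- Cauchy product gives S * S = 1/(1+x^2)
  have hcauchy : HasSum (fun n => ∑ k ∈ Finset.range (n + 1), f k * f (n - k)) (S * S) :=
    hasSum_sum_range_mul_of_summable_norm hsumnorm hsumnorm
  have hinner : ∀ n, ∑ k ∈ Finset.range (n + 1), f k * f (n - k) = (-(x ^ 2)) ^ n := by
    intro n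
    have : ∀ k ∈ Finset.range (n + 1), f k * f (n - k) = W k * W (n - k) * (-(x ^ 2)) ^ n := by
      intro k hk
      have hk' : k ≤ n := Nat.lt_succ_iff.mp (Finset.mem_range.mp hk)
      have hpow : (-(x ^ 2)) ^ k * (-(x ^ 2)) ^ (n - k) = (-(x ^ 2)) ^ n := by
        rw [← pow_add, Nat.add_sub_cancel' hk']
      rw [hf_def]
      calc W k * (-(x ^ 2)) ^ k * (W (n - k) * (-(x ^ 2)) ^ (n - k))
          = W k * W (n - k) * ((-(x ^ 2)) ^ k * (-(x ^ 2)) ^ (n - k)) := by ring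
        _ = W k * W (n - k) * (-(x ^ 2)) ^ n := by rw [hpow]
    rw [Finset.sum_congr rfl this, ← Finset.sum_mul, conv_eq n, one_mul]
  have hgeo : HasSum (fun n : ℕ => (-(x ^ 2)) ^ n) (1 - -(x ^ 2))⁻¹ := by
    apply hasSum_geometric_of_norm_lt_one
    rw [Real.norm_eq_abs, abs_neg, abs_of_pos hx2pos]
    exact hx2
  have hSS : S * S = (1 + x ^ 2)⁻¹ := by
    have h1 : HasSum (fun n : ℕ => (-(x ^ 2)) ^ n) (S * S) := by
      have := hcauchy
      simpa only [hinner] using this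
    have := h1.unique hgeo
    rw [this]
    norm_num
  -- positivity of S
  have heven : Summable fun k => f (2 * k) :=
    hsum.comp_injective (fun a b h => by omega)
  have hodd : Summable fun k => f (2 * k + 1) :=
    hsum.comp_injective (fun a b h => by omega)
  have htot : HasSum f ((∑' k, f (2 * k)) + ∑' k, f (2 * k + 1)) :=
    heven.hasSum.even_add_odd hodd.hasSum
  have hpair : HasSum (fun k => f (2 * k) + f (2 * k + 1))
      ((∑' k, f (2 * k)) + ∑' k, f (2 * k + 1)) := heven.hasSum.add hodd.hasSum
  have hposterm : ∀ k, 0 < f (2 * k) + f (2 * k + 1) := by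
    intro k
    have he : f (2 * k) = W (2 * k) * (x ^ 2) ^ (2 * k) := by
      show W (2 * k) * (-(x ^ 2)) ^ (2 * k) = _
      rw [Even.neg_pow (even_two_mul k)]
    have ho : f (2 * k + 1) = -(W (2 * k + 1) * (x ^ 2) ^ (2 * k) * x ^ 2) := by
      show W (2 * k + 1) * (-(x ^ 2)) ^ (2 * k + 1) = _
      rw [Odd.neg_pow ⟨k, by ring⟩, pow_succ]
      ring
    rw [he, ho]
    have h1 : W (2 * k + 1) * x ^ 2 < W (2 * k) := by
      nlinarith [W_succ_le (2 * k), W_pos (2 * k + 1)]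
    nlinarith [pow_pos hx2pos (2 * k)]
  have hSpos : 0 < S := by
    have hSeq : S = (∑' k, f (2 * k)) + ∑' k, f (2 * k + 1) := hS.unique htot
    have hle : f (2 * 0) + f (2 * 0 + 1) ≤ (∑' k, f (2 * k)) + ∑' k, f (2 * k + 1) :=
      le_hasSum hpair 0 fun i _ => (hposterm i).le
    have := hposterm 0
    linarith [hSeq ▸ hle]
  -- conclude S = 1/sqrt(1+x^2)
  have hSval : S = 1 / Real.sqrt (1 + x ^ 2) := by
    have h1 : S = Real.sqrt (S * S) := (Real.sqrt_mul_self hSpos.le).symm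
    rw [h1, hSS, Real.sqrt_inv, one_div]
  rw [← hSval]
  exact hS

lemma b_eq (j : ℕ) : (Nat.centralBinom (j + 1) : ℝ) = 2 * b (j + 1) := by
  have hfac : Nat.centralBinom (j + 1) * Nat.factorial (j + 1) * Nat.factorial (j + 1)
      = Nat.factorial (2 * (j + 1)) := by
    rw [Nat.centralBinom]
    have := Nat.choose_mul_factorial_mul_factorial (Nat.le_mul_of_pos_left (j+1) zero_lt_two)
    have h2 : 2 * (j + 1) - (j + 1) = j + 1 := by omega
    rw [h2] at this
    exact this
  have h2j : 2 * (j + 1) = (2 * j + 1) + 1 := by omega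
  have hfac2 : Nat.factorial (2 * (j + 1)) = (2 * j + 2) * Nat.factorial (2 * j + 1) := by
    rw [h2j, Nat.factorial_succ]
  have hfacj : Nat.factorial (j + 1) = (j + 1) * Nat.factorial j := Nat.factorial_succ j
  have hb : b (j + 1) = (Nat.factorial (2 * j + 1) : ℝ)
      / ((Nat.factorial (j + 1) : ℝ) * (Nat.factorial j : ℝ)) := by
    unfold b
    have h1 : 2 * (j + 1) - 1 = 2 * j + 1 := by omega
    have h2 : j + 1 - 1 = j := by omega
    simp [h1, h2]
  have hR : (Nat.centralBinom (j + 1) : ℝ) * (Nat.factorial (j + 1) : ℝ)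
      * (Nat.factorial (j + 1) : ℝ) = (2 * (j:ℝ) + 2) * (Nat.factorial (2 * j + 1) : ℝ) := by
    exact_mod_cast hfac.trans hfac2
  have hj1 : ((Nat.factorial (j + 1) : ℝ)) ≠ 0 := by
    exact_mod_cast Nat.factorial_ne_zero (j + 1)
  have hj : ((Nat.factorial j : ℝ)) ≠ 0 := by exact_mod_cast Nat.factorial_ne_zero j
  have hfacjR : (Nat.factorial (j + 1) : ℝ) = ((j : ℝ) + 1) * (Nat.factorial j : ℝ) := by
    exact_mod_cast hfacj
  have hj1' : ((j:ℝ) + 1) ≠ 0 := by positivity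
  have key : (Nat.centralBinom (j + 1) : ℝ)
      * ((Nat.factorial (j + 1) : ℝ) * (Nat.factorial j : ℝ))
      = 2 * (Nat.factorial (2 * j + 1) : ℝ) := by
    apply mul_left_cancel₀ hj1'
    calc ((j:ℝ) + 1) * ((Nat.centralBinom (j + 1) : ℝ)
          * ((Nat.factorial (j + 1) : ℝ) * (Nat.factorial j : ℝ)))
        = (Nat.centralBinom (j + 1) : ℝ) * (Nat.factorial (j + 1) : ℝ)
          * (((j:ℝ) + 1) * (Nat.factorial j : ℝ)) := by ring
      _ = (Nat.centralBinom (j + 1) : ℝ) * (Nat.factorial (j + 1) : ℝ)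
          * (Nat.factorial (j + 1) : ℝ) := by rw [← hfacjR]
      _ = (2 * (j:ℝ) + 2) * (Nat.factorial (2 * j + 1) : ℝ) := hR
      _ = ((j:ℝ) + 1) * (2 * (Nat.factorial (2 * j + 1) : ℝ)) := by ring
  rw [hb]
  field_simp
  linear_combination key

theorem series_b (x : ℝ) (hx0 : 0 < |x|) (hx : |x| < 1) :
    HasSum (fun j : ℕ => b (j + 1) * (-1) ^ (j + 1) / 2 ^ (2 * (j + 1)) * x ^ (2 * j))
      ((1 / 2) * (1 / (1 + Real.sqrt (1 + x ^ 2)) - 1 / Real.sqrt (1 + x ^ 2))) := by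
  have hxne : x ≠ 0 := by
    intro h; rw [h] at hx0; simp at hx0
  have hx2pos : 0 < x ^ 2 := by positivity
  set s := Real.sqrt (1 + x ^ 2) with hs_def
  have hs2 : s ^ 2 = 1 + x ^ 2 := Real.sq_sqrt (by positivity)
  have hspos : 0 < s := Real.sqrt_pos.mpr (by positivity)
  have hs1 : 1 < s := by nlinarith
  have hkey := key x hxne hx
  set f : ℕ → ℝ := fun n => W n * (-(x ^ 2)) ^ n with hf_def
  have htail : HasSum (fun n => f (n + 1)) (1 / s - 1) := by
    rw [hasSum_nat_add_iff 1]
    have : f 0 = 1 := by simp [hf_def, W_zero]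
    simpa [this] using hkey
  have hmul : HasSum (fun n => f (n + 1) * (1 / (2 * x ^ 2)))
      ((1 / s - 1) * (1 / (2 * x ^ 2))) := htail.mul_right _
  have hpt : ∀ j : ℕ, b (j + 1) * (-1) ^ (j + 1) / 2 ^ (2 * (j + 1)) * x ^ (2 * j)
      = f (j + 1) * (1 / (2 * x ^ 2)) := by
    intro j
    have hb : b (j + 1) = (Nat.centralBinom (j + 1) : ℝ) / 2 := by
      rw [b_eq j]; ring
    have hW : W (j + 1) = (Nat.centralBinom (j + 1) : ℝ) / 4 ^ (j + 1) := rfl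
    have hpow4 : (2:ℝ) ^ (2 * (j + 1)) = 4 ^ (j + 1) := by
      rw [pow_mul]; norm_num
    have hnegpow : (-(x ^ 2)) ^ (j + 1) = (-1) ^ (j + 1) * x ^ (2 * j) * x ^ 2 := by
      rw [neg_pow, ← pow_mul]
      have : 2 * (j + 1) = 2 * j + 2 := by omega
      rw [this, pow_add]
      ring
    rw [hf_def]
    simp only [hb, hW, hpow4, hnegpow]
    have h4 : (4:ℝ) ^ (j + 1) ≠ 0 := by positivity
    field_simp
  have hval : (1 / s - 1) * (1 / (2 * x ^ 2)) = (1 / 2) * (1 / (1 + s) - 1 / s) := by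
    have hx2eq : x ^ 2 = s ^ 2 - 1 := by rw [hs2]; ring
    have hsne : s ≠ 0 := hspos.ne'
    have hs1ne : s - 1 ≠ 0 := by nlinarith
    have hs1ne' : 1 + s ≠ 0 := by nlinarith
    have hfact : s ^ 2 - 1 = (s - 1) * (1 + s) := by ring
    rw [hx2eq, hfact]
    field_simp
    ring
  rw [← hval]
  have := hmul
  simp only [← hpt] at this
  exact this
end

section
/- The power series Σ_{j≥2} d_j * (-1)^j / 2^(2j-1) * x^(2j-4), with d_j = Σ_{j1+j2+j3=j-2} 2(j1+1) a_{j1} a_{j2} a_{j3}, converges for real x with |x| < 1 to (1/sqrt(1+x^2)) * (1/(1 + sqrt(1+x^2)))^2. -/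
noncomputable def d (j : ℕ) : ℝ :=
  if j < 2 then 0
  else ∑ p ∈ Finset.HasAntidiagonal.antidiagonal (j - 2),
        ∑ q ∈ Finset.HasAntidiagonal.antidiagonal p.2,
          2 * ((p.1 : ℝ) + 1) * a p.1 * a q.1 * a q.2

open Finset

namespace SeriesDAux

noncomputable def c (j : ℕ) : ℝ := (Nat.centralBinom j : ℝ)

lemma a_nonneg (j : ℕ) : 0 ≤ a j := by
  unfold a; positivity

lemma succ_mul_a (j : ℕ) : ((j : ℝ) + 1) * a j = c j := by
  have h := Nat.choose_mul_factorial_mul_factorial (show j ≤ 2 * j by omega)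
  have h2 : 2 * j - j = j := by omega
  rw [h2] at h
  have hcast : (((2 * j).choose j : ℕ) : ℝ) * (Nat.factorial j : ℝ) * (Nat.factorial j : ℝ)
      = (Nat.factorial (2 * j) : ℝ) := by exact_mod_cast congrArg (Nat.cast : ℕ → ℝ) h
  have hfj : (Nat.factorial j : ℝ) ≠ 0 := by positivity
  have hj1 : ((j : ℝ) + 1) ≠ 0 := by positivity
  unfold a
  rw [show c j = (((2 * j).choose j : ℕ) : ℝ) from by simp [c, Nat.centralBinom]]
  rw [Nat.factorial_succ]
  push_cast
  field_simp
  linear_combination (-1:ℝ) * hcast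

lemma a_eq_catalan (j : ℕ) : a j = (catalan j : ℝ) := by
  have h := succ_mul_catalan_eq_centralBinom j
  have h1 : ((j : ℝ) + 1) * (catalan j : ℝ) = c j := by
    unfold c; exact_mod_cast congrArg (Nat.cast : ℕ → ℝ) h
  have hj1 : ((j : ℝ) + 1) ≠ 0 := by positivity
  exact mul_left_cancel₀ hj1 ((succ_mul_a j).trans h1.symm)

lemma a_conv (n : ℕ) : ∑ p ∈ antidiagonal n, a p.1 * a p.2 = a (n + 1) := by
  simp only [a_eq_catalan]
  exact_mod_cast (catalan_succ' n).symm

lemma a_conv_range (n : ℕ) : ∑ k ∈ range (n + 1), a k * a (n - k) = a (n + 1) := by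
  rw [← Finset.Nat.sum_antidiagonal_eq_sum_range_succ (fun i j => a i * a j)]
  exact a_conv n

lemma c_nonneg (j : ℕ) : 0 ≤ c j := by unfold c; positivity

lemma c_zero : c 0 = 1 := by simp [c, Nat.centralBinom]

lemma a_zero : a 0 = 1 := by norm_num [a, Nat.factorial]

lemma c_succ (j : ℕ) : ((j : ℝ) + 1) * c (j + 1) = (4 * j + 2) * c j := by
  unfold c
  have := congrArg (Nat.cast : ℕ → ℝ) (Nat.succ_mul_centralBinom_succ j)
  push_cast at this
  linarith

lemma half_sum (f : ℕ → ℝ) (m : ℕ) :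
    2 * ∑ k ∈ range (m + 1), (k : ℝ) * (f k * f (m - k))
      = (m : ℝ) * ∑ k ∈ range (m + 1), f k * f (m - k) := by
  have href := Finset.sum_range_reflect (fun k => (k : ℝ) * (f k * f (m - k))) (m + 1)
  simp only [Nat.add_sub_cancel] at href
  rw [two_mul]
  nth_rewrite 1 [← href]
  rw [← Finset.sum_add_distrib, Finset.mul_sum]
  apply Finset.sum_congr rfl
  intro k hk
  have hk' : k ≤ m := by simpa [Nat.lt_succ_iff] using Finset.mem_range.mp hk
  have h1 : m - (m - k) = k := Nat.sub_sub_self hk'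
  have h2 : ((m - k : ℕ) : ℝ) = (m : ℝ) - (k : ℝ) := by
    have := Nat.cast_sub (R := ℝ) hk'; exact this
  rw [h1, h2]
  ring

lemma c_conv (n : ℕ) : ∑ k ∈ range (n + 1), c k * c (n - k) = 4 ^ n := by
  induction n with
  | zero => simp [c_zero]
  | succ n ih =>
    have hT := half_sum c (n + 1)
    have hU := half_sum c n
    have hshift : ∑ k ∈ range (n + 2), (k : ℝ) * (c k * c (n + 1 - k))
        = ∑ i ∈ range (n + 1), ((i : ℝ) + 1) * (c (i + 1) * c (n - i)) := by
      rw [Finset.sum_range_succ' (fun k => (k : ℝ) * (c k * c (n + 1 - k))) (n + 1)]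
      simp only [Nat.cast_zero, zero_mul, add_zero]
      apply Finset.sum_congr rfl
      intro i hi
      have : n + 1 - (i + 1) = n - i := by omega
      rw [this]
      push_cast
      ring
    have hterm : ∀ i : ℕ, ((i : ℝ) + 1) * (c (i + 1) * c (n - i))
        = 4 * ((i : ℝ) * (c i * c (n - i))) + 2 * (c i * c (n - i)) := by
      intro i
      linear_combination (c (n - i)) * c_succ i
    have hT2 : ∑ k ∈ range (n + 2), (k : ℝ) * (c k * c (n + 1 - k))
        = 4 * ∑ i ∈ range (n + 1), (i : ℝ) * (c i * c (n - i))
          + 2 * ∑ i ∈ range (n + 1), c i * c (n - i) := by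
      rw [hshift]
      rw [Finset.sum_congr rfl (fun i _ => hterm i)]
      rw [Finset.sum_add_distrib, ← Finset.mul_sum, ← Finset.mul_sum]
    have hn1 : ((n : ℝ) + 1) ≠ 0 := by positivity
    have key : ((n : ℝ) + 1) * ∑ k ∈ range (n + 2), c k * c (n + 1 - k)
        = ((n : ℝ) + 1) * (4 * ∑ k ∈ range (n + 1), c k * c (n - k)) := by
      push_cast at hT
      linarith [hT, hU, hT2]
    have := mul_left_cancel₀ hn1 key
    rw [this, ih]
    ring

lemma c_conv_range (n : ℕ) : ∑ k ∈ range (n + 1), c k * c (n - k) = 4 ^ n := c_conv n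

lemma c_growth (j : ℕ) : c (j + 1) ≤ 4 * c j := by
  have h := c_succ j
  have hj : (0 : ℝ) < (j : ℝ) + 1 := by positivity
  have hc := c_nonneg j
  rw [← mul_le_mul_iff_right₀ hj]
  nlinarith [h, hc]

lemma c_le_pow (j : ℕ) : c j ≤ 4 ^ j := by
  induction j with
  | zero => simp [c_zero]
  | succ j ih =>
    calc c (j + 1) ≤ 4 * c j := c_growth j
    _ ≤ 4 * 4 ^ j := by linarith
    _ = 4 ^ (j + 1) := by ring

lemma a_le_c (j : ℕ) : a j ≤ c j := by
  have h := succ_mul_a j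
  have ha := a_nonneg j
  nlinarith [h, ha]

lemma a_growth (j : ℕ) : a (j + 1) ≤ 4 * a j := by
  have h1 := succ_mul_a (j + 1)
  have h2 := succ_mul_a j
  have h3 := c_growth j
  have ha := a_nonneg j
  have ha1 := a_nonneg (j + 1)
  have hj : (0 : ℝ) < (j : ℝ) + 1 + 1 := by positivity
  push_cast at h1
  rw [← mul_le_mul_iff_right₀ hj]
  nlinarith [h1, h2, h3, ha]

lemma summable_abs_of_bound {u : ℕ → ℝ} {t : ℝ} (hb : ∀ j, |u j| ≤ 4 ^ j)
    (ht : |4 * t| < 1) : Summable (fun j => |u j * t ^ j|) := by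
  refine Summable.of_nonneg_of_le (fun j => abs_nonneg _) (fun j => ?_)
    (summable_geometric_of_lt_one (abs_nonneg _) ht)
  rw [abs_mul, abs_pow, abs_mul, mul_pow, abs_of_nonneg (show (0:ℝ) ≤ 4 by norm_num)]
  exact mul_le_mul_of_nonneg_right (hb j) (by positivity)

lemma hasSum_pos_aux {u : ℕ → ℝ} {t S : ℝ} (hu0 : u 0 = 1) (hup : ∀ j, 0 ≤ u j)
    (hg : ∀ j, u (j + 1) ≤ 4 * u j) (ht : |t| < 1 / 4)
    (hS : HasSum (fun j => u j * t ^ j) S) : 0 < S := by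
  set f := fun j => u j * t ^ j with hf
  have hsm : Summable f := hS.summable
  have he : Summable (fun k => f (2 * k)) :=
    hsm.comp_injective (fun p q h => by omega)
  have ho : Summable (fun k => f (2 * k + 1)) :=
    hsm.comp_injective (fun p q h => by omega)
  have hEO : HasSum f ((∑' k, f (2 * k)) + ∑' k, f (2 * k + 1)) :=
    HasSum.even_add_odd he.hasSum ho.hasSum
  have hSval : S = (∑' k, f (2 * k)) + ∑' k, f (2 * k + 1) := hS.unique hEO
  have hpair : HasSum (fun k => f (2 * k) + f (2 * k + 1)) S := by
    rw [hSval]; exact he.hasSum.add ho.hasSum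
  have habs := abs_lt.mp ht
  have h0 : 0 < f (2 * 0) + f (2 * 0 + 1) := by
    simp only [hf, hu0]
    norm_num
    have h1 : u 1 ≤ 4 := by have := hg 0; rw [hu0] at this; linarith
    nlinarith [hup 1, mul_le_mul_of_nonneg_left habs.1.le (hup 1)]
  have hnn : ∀ k, 0 ≤ f (2 * k) + f (2 * k + 1) := by
    intro k
    have hte : (0:ℝ) ≤ t ^ (2 * k) := by rw [pow_mul]; positivity
    have heq : f (2 * k) + f (2 * k + 1) = t ^ (2 * k) * (u (2 * k) + u (2 * k + 1) * t) := by
      simp only [hf]; rw [pow_succ]; ring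
    have h2 : 0 ≤ u (2 * k) + u (2 * k + 1) * t := by
      nlinarith [hg (2 * k), hup (2 * k + 1), hup (2 * k),
        mul_le_mul_of_nonneg_left habs.1.le (hup (2 * k + 1))]
    rw [heq]
    exact mul_nonneg hte h2
  exact lt_of_lt_of_le h0 (le_hasSum hpair 0 (fun k _ => hnn k))

end SeriesDAux

open SeriesDAux in
set_option maxHeartbeats 400000 in
theorem series_d (x : ℝ) (hx : |x| < 1) :
    HasSum (fun j : ℕ => d (j + 2) * (-1) ^ (j + 2) / 2 ^ (2 * (j + 2) - 1) * x ^ (2 * j))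
      ((1 / Real.sqrt (1 + x ^ 2)) * (1 / (1 + Real.sqrt (1 + x ^ 2))) ^ 2) := by
  set s := Real.sqrt (1 + x ^ 2) with hs_def
  set t : ℝ := -(x ^ 2) / 4 with ht_def
  have hx2 : x ^ 2 < 1 := by
    rw [← sq_abs]; nlinarith [abs_nonneg x, hx]
  have hx2nn : (0:ℝ) ≤ x ^ 2 := sq_nonneg x
  have ht4 : |4 * t| < 1 := by
    rw [ht_def]
    rw [show 4 * (-(x ^ 2) / 4) = -(x ^ 2) by ring, abs_neg, abs_of_nonneg hx2nn]
    exact hx2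
  have ht : |t| < 1 / 4 := by
    rw [ht_def, abs_div, abs_neg, abs_of_nonneg hx2nn]
    norm_num
    linarith
  have htle : t ≤ 0 := by rw [ht_def]; nlinarith
  have hspos : 0 < s := Real.sqrt_pos.mpr (by positivity)
  have hsq : s ^ 2 = 1 - 4 * t := by
    rw [hs_def, Real.sq_sqrt (by positivity : (0:ℝ) ≤ 1 + x ^ 2), ht_def]; ring
  have hs1 : 1 ≤ s := by
    nlinarith [hsq, hspos, hx2nn]
  -- the two power series
  have hCa : ∀ j, |a j * t ^ j| ≤ |a j * t ^ j| := fun _ => le_rfl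
  have hbA : ∀ j, |a j| ≤ 4 ^ j := fun j => by
    rw [abs_of_nonneg (a_nonneg j)]; exact le_trans (a_le_c j) (c_le_pow j)
  have hbC : ∀ j, |c j| ≤ 4 ^ j := fun j => by
    rw [abs_of_nonneg (c_nonneg j)]; exact c_le_pow j
  have sumA : Summable (fun j => |a j * t ^ j|) := summable_abs_of_bound hbA ht4
  have sumC : Summable (fun j => |c j * t ^ j|) := summable_abs_of_bound hbC ht4
  have normA : Summable (fun j => ‖a j * t ^ j‖) := by simpa only [Real.norm_eq_abs] using sumA
  have normC : Summable (fun j => ‖c j * t ^ j‖) := by simpa only [Real.norm_eq_abs] using sumC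
  set G : ℝ := ∑' j, a j * t ^ j with hG_def
  set F : ℝ := ∑' j, c j * t ^ j with hF_def
  have hGsum : HasSum (fun j => a j * t ^ j) G := sumA.of_abs.hasSum
  have hFsum : HasSum (fun j => c j * t ^ j) F := sumC.of_abs.hasSum
  have hGpos : 0 < G := hasSum_pos_aux a_zero a_nonneg a_growth ht hGsum
  have hFpos : 0 < F := hasSum_pos_aux c_zero c_nonneg c_growth ht hFsum
  -- F * F = (1 - 4t)⁻¹
  have hFF := hasSum_sum_range_mul_of_summable_norm normC normC
  rw [← hF_def] at hFF
  have hFFterm : ∀ n : ℕ, ∑ k ∈ range (n + 1), (c k * t ^ k) * (c (n - k) * t ^ (n - k))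
      = (4 * t) ^ n := by
    intro n
    have : ∀ k ∈ range (n + 1), (c k * t ^ k) * (c (n - k) * t ^ (n - k))
        = (c k * c (n - k)) * t ^ n := by
      intro k hk
      have hk' : k ≤ n := by simpa [Nat.lt_succ_iff] using Finset.mem_range.mp hk
      rw [show (c k * t ^ k) * (c (n - k) * t ^ (n - k)) = (c k * c (n - k)) * (t ^ k * t ^ (n - k))
        from by ring, ← pow_add, Nat.add_sub_cancel' hk']
    rw [Finset.sum_congr rfl this, ← Finset.sum_mul, c_conv_range, mul_pow]
  have hF2 : HasSum (fun n => (4 * t) ^ n) (F * F) :=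
    hFF.congr_fun (fun n => (hFFterm n).symm)
  have hFFval : F * F = (1 - 4 * t)⁻¹ := hF2.unique (hasSum_geometric_of_abs_lt_one ht4)
  -- F = 1 / s
  have hne : (1 - 4 * t) ≠ 0 := by rw [← hsq]; positivity
  have hFs : F * s = 1 := by
    have h1 : (F * s) * (F * s) = 1 := by
      rw [show (F * s) * (F * s) = (F * F) * s ^ 2 from by ring, hFFval, hsq]
      exact inv_mul_cancel₀ hne
    have h2 : (F * s - 1) * (F * s + 1) = 0 := by linear_combination h1
    rcases mul_eq_zero.mp h2 with h | h
    · linarith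
    · nlinarith [hFpos, hspos]
  have hFval : F = 1 / s := by
    rw [eq_div_iff (ne_of_gt hspos)]; exact hFs
  -- G identity : t * (G * G) = G - 1
  have hGG := hasSum_sum_range_mul_of_summable_norm normA normA
  rw [← hG_def] at hGG
  have hGGterm : ∀ n : ℕ, ∑ k ∈ range (n + 1), (a k * t ^ k) * (a (n - k) * t ^ (n - k))
      = a (n + 1) * t ^ n := by
    intro n
    have : ∀ k ∈ range (n + 1), (a k * t ^ k) * (a (n - k) * t ^ (n - k))
        = (a k * a (n - k)) * t ^ n := by
      intro k hk
      have hk' : k ≤ n := by simpa [Nat.lt_succ_iff] using Finset.mem_range.mp hk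
      rw [show (a k * t ^ k) * (a (n - k) * t ^ (n - k)) = (a k * a (n - k)) * (t ^ k * t ^ (n - k))
        from by ring, ← pow_add, Nat.add_sub_cancel' hk']
    rw [Finset.sum_congr rfl this, ← Finset.sum_mul, a_conv_range]
  have hG2 : HasSum (fun n => a (n + 1) * t ^ n) (G * G) :=
    hGG.congr_fun (fun n => (hGGterm n).symm)
  have hG3 : HasSum (fun n => a (n + 1) * t ^ (n + 1)) (t * (G * G)) :=
    (hG2.mul_left t).congr_fun (fun n => by rw [pow_succ]; ring)
  have hG4 : HasSum (fun n => a (n + 1) * t ^ (n + 1)) (G - 1) := by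
    have := (hasSum_nat_add_iff' (f := fun j => a j * t ^ j) 1).mpr hGsum
    simpa [a_zero] using this
  have hGeq : t * (G * G) = G - 1 := hG3.unique hG4
  -- G = 2 / (1 + s)
  have h1s : (0:ℝ) < 1 + s := by linarith
  have hGval : G = 2 / (1 + s) := by
    have hkey : (G * (1 + s) - 2) * (t * G - (1 + s) / 2) = 0 := by
      linear_combination (1 + s) * hGeq - (G / 2) * hsq
    rcases mul_eq_zero.mp hkey with h | h
    · rw [eq_div_iff (ne_of_gt h1s)]; linarith
    · exfalso
      have : t * G ≤ 0 := mul_nonpos_of_nonpos_of_nonneg htle hGpos.le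
      nlinarith [hs1]
    -- done
  -- triple Cauchy product
  have hw_norm := summable_norm_sum_mul_antidiagonal_of_summable_norm normA normA
  have h2_norm := summable_norm_sum_mul_antidiagonal_of_summable_norm normC hw_norm
  have hA := tsum_mul_tsum_eq_tsum_sum_antidiagonal_of_summable_norm normA normA
  have hB := tsum_mul_tsum_eq_tsum_sum_antidiagonal_of_summable_norm normC hw_norm
  have hTriple := h2_norm.of_norm.hasSum
  rw [← hB, ← hA, ← hF_def, ← hG_def] at hTriple
  -- rewrite the terms in terms of d
  have hd : ∀ n : ℕ, d (n + 2) = ∑ p ∈ antidiagonal n, ∑ q ∈ antidiagonal p.2,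
      2 * ((p.1 : ℝ) + 1) * a p.1 * a q.1 * a q.2 := by
    intro n
    rw [d, if_neg (by omega)]
    norm_num
  have hterm3 : ∀ n : ℕ, ∑ p ∈ antidiagonal n, (c p.1 * t ^ p.1) *
        (∑ q ∈ antidiagonal p.2, (a q.1 * t ^ q.1) * (a q.2 * t ^ q.2))
      = 1 / 2 * d (n + 2) * t ^ n := by
    intro n
    rw [hd n, Finset.mul_sum, Finset.sum_mul]
    apply Finset.sum_congr rfl
    intro p hp
    have hpm : p.1 + p.2 = n := Finset.HasAntidiagonal.mem_antidiagonal.mp hp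
    rw [Finset.mul_sum, Finset.mul_sum, Finset.sum_mul]
    apply Finset.sum_congr rfl
    intro q hq
    have hqm : q.1 + q.2 = p.2 := Finset.HasAntidiagonal.mem_antidiagonal.mp hq
    have hpow : t ^ (p.1) * (t ^ (q.1) * t ^ (q.2)) = t ^ n := by
      rw [← pow_add, ← pow_add]; congr 1; omega
    rw [← succ_mul_a p.1, ← hpow]
    ring
  have hTriple2 : HasSum (fun n => 1 / 2 * d (n + 2) * t ^ n) (F * (G * G)) :=
    hTriple.congr_fun (fun n => (hterm3 n).symm)
  -- final conversion
  have hfin := hTriple2.mul_left (1 / 4)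
  have hfun : (fun n => 1 / 4 * (1 / 2 * d (n + 2) * t ^ n))
      = fun n : ℕ => d (n + 2) * (-1) ^ (n + 2) / 2 ^ (2 * (n + 2) - 1) * x ^ (2 * n) := by
    funext n
    have hexp : 2 * (n + 2) - 1 = 2 * n + 3 := by omega
    have htn : t ^ n = (-1) ^ n * x ^ (2 * n) / 4 ^ n := by
      rw [ht_def, div_pow, neg_pow, pow_mul]
    have h2pow : (2:ℝ) ^ (2 * n + 3) = 8 * 4 ^ n := by
      rw [pow_add, pow_mul]; norm_num [mul_comm]
    rw [hexp, htn, h2pow, pow_add]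
    have h4 : (4:ℝ) ^ n ≠ 0 := by positivity
    field_simp
    ring
  have hfin2 := hfin.congr_fun (fun n => (congrFun hfun n).symm)
  have hval : 1 / 4 * (F * (G * G)) = (1 / s) * (1 / (1 + s)) ^ 2 := by
    rw [hFval, hGval]
    field_simp
    ring
  rwa [hval] at hfin2
end
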